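/- Let Y be a Banach space, (ε_n) a null sequence in [0,1), and (y_n*) a sequence in Y* such that ‖∑ α_n y_n*‖ ≤ sup_n (1+ε_n)|α_n| for all (α_n) ∈ c₀ and ‖y_n*‖ → 1. Let (N_n) be pairwise disjoint infinite subsets of ℕ and x_n* = ∑_{k ∈ N_n} y_k*/(1+ε_k) (weak* convergent series). Then ‖∑ α_n x_n*‖ = sup_n |α_n| for every bounded scalar sequence (α_n); that is, the x_n* generate ℓ∞ isometrically. -/

import Mathlib

open Filter Topology NormedSpace

/-- Master estimate: if the weights `γ` satisfy `(1 + ε k) * |γ k| ≤ M`, the series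
`∑ γ k * ystar k y` is (absolutely) summable with sum at most `M * ‖y‖` in absolute value. -/
lemma stmt1_key {Y : Type*} [NormedAddCommGroup Y] [NormedSpace ℝ Y]
    (ε : ℕ → ℝ) (ystar : ℕ → StrongDual ℝ Y)
    (hupper : ∀ (s : Finset ℕ) (α : ℕ → ℝ),
      ‖∑ n ∈ s, α n • ystar n‖ ≤ ⨆ n ∈ s, (1 + ε n) * |α n|)
    (γ : ℕ → ℝ) (M : ℝ) (hM0 : 0 ≤ M)
    (hγ : ∀ k, (1 + ε k) * |γ k| ≤ M) (y : Y) :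
    Summable (fun k => γ k * ystar k y) ∧ |∑' k, γ k * ystar k y| ≤ M * ‖y‖ := by
  have hsum : ∀ G : Finset ℕ, ∑ k ∈ G, |γ k * ystar k y| ≤ M * ‖y‖ := by
    intro G
    set β : ℕ → ℝ := fun k => if γ k * ystar k y < 0 then -γ k else γ k with hβ
    have h1 : ∀ k, |γ k * ystar k y| = β k * ystar k y := by
      intro k; simp only [hβ]; split_ifs with h
      · rw [abs_of_neg h]; ring
      · rw [abs_of_nonneg (not_lt.1 h)]
    have h2 : ∀ k, |β k| = |γ k| := by
      intro k; simp only [hβ]; split_ifs <;> simp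
    have hb : ‖∑ k ∈ G, β k • ystar k‖ ≤ M := by
      refine le_trans (hupper G β) ?_
      refine Real.iSup_le (fun k => Real.iSup_le (fun _ => ?_) hM0) hM0
      rw [h2]; exact hγ k
    calc ∑ k ∈ G, |γ k * ystar k y| = (∑ k ∈ G, β k • ystar k) y := by
          rw [ContinuousLinearMap.sum_apply]
          exact Finset.sum_congr rfl fun k _ => by
            rw [h1 k, ContinuousLinearMap.smul_apply, smul_eq_mul]
      _ ≤ ‖(∑ k ∈ G, β k • ystar k) y‖ := le_abs_self _
      _ ≤ ‖∑ k ∈ G, β k • ystar k‖ * ‖y‖ := ContinuousLinearMap.le_opNorm _ _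
      _ ≤ M * ‖y‖ := mul_le_mul_of_nonneg_right hb (norm_nonneg y)
  have habs : Summable fun k => |γ k * ystar k y| :=
    summable_of_sum_le (fun k => abs_nonneg _) hsum
  have hs : Summable fun k => γ k * ystar k y := summable_abs_iff.1 habs
  refine ⟨hs, ?_⟩
  have habs' : Summable fun k => ‖γ k * ystar k y‖ := by
    simpa only [Real.norm_eq_abs] using habs
  have h := norm_tsum_le_tsum_norm habs'
  simp only [Real.norm_eq_abs] at h
  exact le_trans h (Summable.tsum_le_of_sum_le habs hsum)

set_option maxHeartbeats 2000000 in
theorem stmt1 {Y : Type*} [NormedAddCommGroup Y] [NormedSpace ℝ Y] [CompleteSpace Y]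
    (ε : ℕ → ℝ) (hε : ∀ n, ε n ∈ Set.Ico (0 : ℝ) 1) (hεlim : Tendsto ε atTop (𝓝 0))
    (ystar : ℕ → StrongDual ℝ Y)
    (hupper : ∀ (s : Finset ℕ) (α : ℕ → ℝ),
      ‖∑ n ∈ s, α n • ystar n‖ ≤ ⨆ n ∈ s, (1 + ε n) * |α n|)
    (hnorm : Tendsto (fun n => ‖ystar n‖) atTop (𝓝 1))
    (N : ℕ → Set ℕ) (hNinf : ∀ n, (N n).Infinite)
    (hNdisj : Pairwise fun i j => Disjoint (N i) (N j))
    (xstar : ℕ → StrongDual ℝ Y)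
    (hx : ∀ (n : ℕ) (y : Y),
      HasSum (fun k : N n => ystar k.1 y / (1 + ε k.1)) (xstar n y)) :
    ∀ α : ℕ → ℝ, (∃ C, ∀ n, |α n| ≤ C) →
      ∃ S : StrongDual ℝ Y, (∀ y : Y, HasSum (fun n => α n * xstar n y) (S y)) ∧
        ‖S‖ = ⨆ n, |α n| := by
  classical
  intro α hC
  obtain ⟨C, hC⟩ := hC
  have hεpos : ∀ k, (0:ℝ) < 1 + ε k := fun k => by have := (hε k).1; linarith
  set M : ℝ := ⨆ n, |α n| with hMdef
  have hbdd : BddAbove (Set.range fun n => |α n|) := ⟨C, by rintro _ ⟨n, rfl⟩; exact hC n⟩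
  have hM : ∀ n, |α n| ≤ M := fun n => le_ciSup hbdd n
  have hM0 : 0 ≤ M := le_trans (abs_nonneg _) (hM 0)
  -- the combined coefficient sequence
  set γ : ℕ → ℝ := fun k => if h : ∃ n, k ∈ N n then α h.choose / (1 + ε k) else 0 with hγdef
  have hγ : ∀ k n, k ∈ N n → γ k = α n / (1 + ε k) := by
    intro k n hk
    have h : ∃ n, k ∈ N n := ⟨n, hk⟩
    have hceq : h.choose = n := by
      by_contra hne
      exact Set.disjoint_left.mp (hNdisj hne) h.choose_spec hk
    simp only [hγdef, dif_pos h, hceq]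
  have hγM : ∀ k, (1 + ε k) * |γ k| ≤ M := by
    intro k
    by_cases h : ∃ n, k ∈ N n
    · obtain ⟨n, hn⟩ := h
      rw [hγ k n hn, abs_div, abs_of_pos (hεpos k), mul_div_cancel₀ _ (hεpos k).ne']
      exact hM n
    · simp only [hγdef, dif_neg h]
      simpa using hM0
  have hsummable : ∀ y : Y, Summable (fun k => γ k * ystar k y) :=
    fun y => (stmt1_key ε ystar hupper γ M hM0 hγM y).1
  have hbound : ∀ y : Y, |∑' k, γ k * ystar k y| ≤ M * ‖y‖ :=
    fun y => (stmt1_key ε ystar hupper γ M hM0 hγM y).2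
  set Sfun : Y → ℝ := fun y => ∑' k, γ k * ystar k y with hSfun
  -- linearity
  have hadd : ∀ y z : Y, Sfun (y + z) = Sfun y + Sfun z := by
    intro y z
    have h := ((hsummable y).hasSum.add (hsummable z).hasSum)
    have he : (fun k => γ k * ystar k y + γ k * ystar k z)
        = fun k => γ k * ystar k (y + z) := by
      funext k; rw [map_add]; ring
    rw [he] at h
    exact h.tsum_eq
  have hsmul : ∀ (c : ℝ) (y : Y), Sfun (c • y) = c * Sfun y := by
    intro c y
    have h := (hsummable y).hasSum.mul_left c
    have he : (fun k => c * (γ k * ystar k y)) = fun k => γ k * ystar k (c • y) := by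
      funext k; rw [map_smul, smul_eq_mul]; ring
    rw [he] at h
    exact h.tsum_eq
  set Slin : Y →ₗ[ℝ] ℝ :=
    { toFun := Sfun
      map_add' := hadd
      map_smul' := hsmul } with hSlin
  set S : StrongDual ℝ Y := LinearMap.mkContinuous Slin M
    (fun y => by simpa [Real.norm_eq_abs, hSlin] using hbound y) with hSdef
  have hSy : ∀ y : Y, S y = Sfun y := fun y => rfl
  -- HasSum over n
  have hhas : ∀ y : Y, HasSum (fun n => α n * xstar n y) (S y) := by
    intro y
    set φ : (Σ n : ℕ, N n) → ℕ := fun p => p.2.1 with hφdef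
    have hφ : Function.Injective φ := by
      rintro ⟨n, k, hk⟩ ⟨n', k', hk'⟩ h
      simp only [hφdef] at h
      obtain rfl : n = n' := by
        by_contra hne
        exact Set.disjoint_left.mp (hNdisj hne) hk (h ▸ hk')
      exact congrArg (Sigma.mk n) (Subtype.ext h)
    have hrange : ∀ k ∉ Set.range φ, γ k * ystar k y = 0 := by
      intro k hk
      have h : ¬∃ n, k ∈ N n := by
        rintro ⟨n, hn⟩
        exact hk ⟨⟨n, k, hn⟩, rfl⟩
      simp only [hγdef, dif_neg h, zero_mul]
    have h1 : HasSum ((fun k => γ k * ystar k y) ∘ φ) (Sfun y) :=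
      (hφ.hasSum_iff hrange).2 (hsummable y).hasSum
    have hfib : ∀ n : ℕ, HasSum (fun k : N n => ((fun k => γ k * ystar k y) ∘ φ) ⟨n, k⟩)
        (α n * xstar n y) := by
      intro n
      have he : (fun k : N n => ((fun k => γ k * ystar k y) ∘ φ) ⟨n, k⟩)
          = fun k : N n => α n * (ystar k.1 y / (1 + ε k.1)) := by
        funext k
        simp only [Function.comp, hφdef]
        rw [hγ k.1 n k.2, div_mul_eq_mul_div, mul_div_assoc]
      rw [he]
      exact (hx n y).mul_left (α n)
    have := h1.sigma hfib
    rwa [hSy]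
  refine ⟨S, hhas, le_antisymm (LinearMap.mkContinuous_norm_le _ hM0 _) ?_⟩
  -- lower bound : M ≤ ‖S‖
  refine Real.iSup_le (fun m => ?_) (norm_nonneg S)
  refine le_of_forall_pos_le_add (fun η hη => ?_)
  have hD : (0:ℝ) < 2 * (M + |α m|) + 1 := by positivity
  set δ : ℝ := min 1 (η / (2 * (M + |α m|) + 1)) with hδdef
  have hδpos : 0 < δ := lt_min one_pos (div_pos hη hD)
  have hδ1 : δ ≤ 1 := min_le_left _ _
  -- choose k₀
  have hev : ∀ᶠ k in atTop, ε k < δ ∧ 1 - δ < ‖ystar k‖ :=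
    (hεlim.eventually_lt_const hδpos).and
      (hnorm.eventually_const_lt (by linarith : (1:ℝ) - δ < 1))
  rw [eventually_atTop] at hev
  obtain ⟨K, hK⟩ := hev
  obtain ⟨k₀, hk₀N, hk₀K⟩ := (hNinf m).exists_gt K
  obtain ⟨hk₀ε, hk₀n⟩ := hK k₀ hk₀K.le
  -- choose y
  obtain ⟨x, hx1, hx2⟩ := (ystar k₀).exists_lt_apply_of_lt_opNorm hk₀n
  set y : Y := if ystar k₀ x < 0 then -x else x with hydef
  have hy1 : ‖y‖ ≤ 1 := by
    simp only [hydef]; split_ifs <;> simpa using hx1.le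
  have hy2 : 1 - δ < ystar k₀ y := by
    rw [Real.norm_eq_abs] at hx2
    simp only [hydef]; split_ifs with h
    · rw [map_neg]; rw [abs_of_neg h] at hx2; linarith
    · rwa [abs_of_nonneg (not_lt.1 h)] at hx2
  set a : ℝ := ystar k₀ y / (1 + ε k₀) with hadef
  have hεk₀ := hεpos k₀
  have hε0 := (hε k₀).1
  have ha : 1 - 2 * δ ≤ a := by
    rw [hadef, le_div_iff₀ hεk₀]
    nlinarith [hy2, hk₀ε, hδ1, hδpos]
  -- the sign
  set t : ℝ := if 0 ≤ α m then -1 else 1 with htdef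
  have ht : t * α m = -|α m| := by
    simp only [htdef]; split_ifs with h
    · rw [abs_of_nonneg h]; ring
    · rw [abs_of_neg (not_le.1 h)]; ring
  have ht1 : |t| = 1 := by
    simp only [htdef]; split_ifs <;> simp
  -- perturbed coefficients
  set γt : ℕ → ℝ := fun k => t * γ k + (if k = k₀ then (M - t * α m) / (1 + ε k₀) else 0)
    with hγtdef
  have hγk₀ : γ k₀ = α m / (1 + ε k₀) := hγ k₀ m hk₀N
  have hγtM : ∀ k, (1 + ε k) * |γt k| ≤ M := by
    intro k
    by_cases hk : k = k₀
    · rw [hk]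
      have hval : γt k₀ = M / (1 + ε k₀) := by
        simp only [hγtdef, if_pos rfl, ↓reduceIte, hγk₀]
        field_simp
        ring
      rw [hval, abs_div, abs_of_pos hεk₀, abs_of_nonneg hM0,
        mul_div_cancel₀ _ hεk₀.ne']
    · simp only [hγtdef, if_neg hk, add_zero, abs_mul, ht1, one_mul]
      exact hγM k
  obtain ⟨hst, hbt⟩ := stmt1_key ε ystar hupper γt M hM0 hγtM y
  -- compute the sum of the perturbed series
  have hhs : HasSum (fun k => γt k * ystar k y) (t * Sfun y + (M - t * α m) * a) := by
    have h1 := (hsummable y).hasSum.mul_left t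
    have h2 := hasSum_ite_eq k₀ ((M - t * α m) / (1 + ε k₀) * ystar k₀ y)
    have h3 := h1.add h2
    have he : (fun k => t * (γ k * ystar k y)
        + (if k = k₀ then (M - t * α m) / (1 + ε k₀) * ystar k₀ y else 0))
        = fun k => γt k * ystar k y := by
      funext k
      simp only [hγtdef]
      split_ifs with h
      · subst h; ring
      · ring
    rw [he] at h3
    have hv : (M - t * α m) / (1 + ε k₀) * ystar k₀ y = (M - t * α m) * a := by
      rw [hadef]; ring
    rwa [hv] at h3
  rw [hhs.tsum_eq] at hbt
  have hbt' : |t * Sfun y + (M - t * α m) * a| ≤ M := by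
    refine le_trans hbt ?_
    calc M * ‖y‖ ≤ M * 1 := mul_le_mul_of_nonneg_left hy1 hM0
      _ = M := mul_one M
  rw [ht] at hbt'
  -- |t * Sfun y| ≤ ‖S‖
  have hSyb : |Sfun y| ≤ ‖S‖ := by
    have := S.le_opNorm y
    rw [Real.norm_eq_abs, hSy] at this
    calc |Sfun y| ≤ ‖S‖ * ‖y‖ := this
      _ ≤ ‖S‖ * 1 := mul_le_mul_of_nonneg_left hy1 (norm_nonneg S)
      _ = ‖S‖ := mul_one _
  have htS : -‖S‖ ≤ t * Sfun y := by
    have : |t * Sfun y| = |Sfun y| := by rw [abs_mul, ht1, one_mul]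
    have h := neg_abs_le (t * Sfun y)
    rw [this] at h
    linarith [hSyb]
  have hMa : (M + |α m|) * (1 - 2 * δ) ≤ (M + |α m|) * a :=
    mul_le_mul_of_nonneg_left ha (by positivity)
  have hub : t * Sfun y + (M + |α m|) * a ≤ M := by
    have := abs_le.1 hbt'
    linarith [this.2]
  -- combine : |α m| ≤ ‖S‖ + 2δ(M + |α m|)
  have hmain : |α m| ≤ ‖S‖ + 2 * δ * (M + |α m|) := by nlinarith
  -- 2δ(M + |α m|) ≤ η
  have hδη : δ ≤ η / (2 * (M + |α m|) + 1) := min_le_right _ _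
  have habs0 : 0 ≤ |α m| := abs_nonneg _
  have h2δ : 2 * δ * (M + |α m|) ≤ η := by
    have h := mul_le_mul_of_nonneg_right hδη (le_of_lt hD)
    rw [div_mul_cancel₀ _ hD.ne'] at h
    nlinarith
  linarith
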